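/- Let C be a coalgebra over a field k and R a commutative k-algebra. A linear map μ : C → R is lazy if and only if μ vanishes on the subspace I₁(C). Consequently, composition with the quotient map π : C → C/I₁(C) gives a bijection between linear maps C/I₁(C) → R and lazy linear maps C → R, which restricts to a group isomorphism Reg(C/I₁(C), R) ≅ Reg_ℓ(C,R) between convolution-invertible maps on the quotient and convolution-invertible lazy maps on C. -/

import Mathlib

open TensorProduct

/-- `I₁(C)`: the subspace of a coalgebra `C` spanned by the elements
`φ(x₁)·x₂ − φ(x₂)·x₁` for `x ∈ C` and linear forms `φ : C → k`. -/
noncomputable def lazySubspace (k : Type*) [Field k] (C : Type*)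
    [AddCommGroup C] [Module k C] [Coalgebra k C] : Submodule k C :=
  Submodule.span k {y : C | ∃ (x : C) (φ : C →ₗ[k] k),
    y = (TensorProduct.lid k C)
          (TensorProduct.map φ LinearMap.id (Coalgebra.comul x))
      - (TensorProduct.rid k C)
          (TensorProduct.map LinearMap.id φ (Coalgebra.comul x))}

/-- The convolution product `f * g = μ_R ∘ (f ⊗ g) ∘ Δ_D`. -/
noncomputable def conv (k : Type*) [Field k] {D R : Type*}
    [AddCommGroup D] [Module k D] [CoalgebraStruct k D]
    [CommRing R] [Algebra k R] (f g : D →ₗ[k] R) : D →ₗ[k] R :=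
  LinearMap.mul' k R ∘ₗ TensorProduct.map f g ∘ₗ Coalgebra.comul

/-- The unit `η_R ∘ ε_D` of the convolution monoid. -/
noncomputable def convUnit (k : Type*) [Field k] (D : Type*) (R : Type*)
    [AddCommGroup D] [Module k D] [CoalgebraStruct k D]
    [CommRing R] [Algebra k R] : D →ₗ[k] R :=
  Algebra.linearMap k R ∘ₗ Coalgebra.counit

/-- Convolution invertibility. -/
noncomputable def IsConvInvertible (k : Type*) [Field k] {D R : Type*}
    [AddCommGroup D] [Module k D] [CoalgebraStruct k D]
    [CommRing R] [Algebra k R] (f : D →ₗ[k] R) : Prop :=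
  ∃ g : D →ₗ[k] R, conv k f g = convUnit k D R ∧ conv k g f = convUnit k D R

/-- A linear map `μ : C → R` is lazy if `μ(x₁) ⊗ x₂ = μ(x₂) ⊗ x₁` in `R ⊗ C`
for all `x ∈ C`. -/
noncomputable def IsLazy (k : Type*) [Field k] {C R : Type*}
    [AddCommGroup C] [Module k C] [Coalgebra k C]
    [CommRing R] [Algebra k R] (μ : C →ₗ[k] R) : Prop :=
  ∀ x : C,
    TensorProduct.map μ (LinearMap.id : C →ₗ[k] C) (Coalgebra.comul x)
      = TensorProduct.map μ (LinearMap.id : C →ₗ[k] C)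
          ((TensorProduct.comm k C C) (Coalgebra.comul x))

section Helpers

lemma sep_aux {k : Type*} [Field k] {R C : Type*} [AddCommGroup R] [Module k R]
    [AddCommGroup C] [Module k C] (s : R ⊗[k] C)
    (h : ∀ ψ : C →ₗ[k] k, (TensorProduct.rid k R) (LinearMap.lTensor R ψ s) = 0) :
    s = 0 := by
  classical
  let b := Module.Basis.ofVectorSpace k C
  let e : R ⊗[k] C ≃ₗ[k] ((Module.Basis.ofVectorSpaceIndex k C) →₀ R) :=
    (TensorProduct.congr (LinearEquiv.refl k R) b.repr).trans
      (TensorProduct.finsuppScalarRight k k R _)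
  have key : ∀ (t : R ⊗[k] C) i,
      e t i = TensorProduct.rid k R (LinearMap.lTensor R (b.coord i) t) := by
    intro t i
    induction t using TensorProduct.induction_on with
    | zero => simp
    | tmul r c =>
        simp [e, TensorProduct.finsuppScalarRight_apply_tmul_apply, Module.Basis.coord]
    | add x y hx hy => simp [map_add, hx, hy]
  have he : e s = 0 := Finsupp.ext fun i => by rw [key, h]; rfl
  simpa using congrArg e.symm he

variable {k : Type*} [Field k] {C R : Type*}
  [AddCommGroup C] [Module k C] [Coalgebra k C]
  [CommRing R] [Algebra k R]

lemma Frw (μ : C →ₗ[k] R) (ψ : C →ₗ[k] k) (t : C ⊗[k] C) :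
    TensorProduct.rid k R (LinearMap.lTensor R ψ
        (TensorProduct.map μ LinearMap.id t))
      = μ (TensorProduct.rid k C (TensorProduct.map LinearMap.id ψ t)) := by
  induction t using TensorProduct.induction_on with
  | zero => simp
  | tmul a b => simp
  | add u v hu hv => simp only [map_add, hu, hv]

lemma Frw2 (μ : C →ₗ[k] R) (ψ : C →ₗ[k] k) (t : C ⊗[k] C) :
    TensorProduct.rid k R (LinearMap.lTensor R ψ
        (TensorProduct.map μ LinearMap.id (TensorProduct.comm k C C t)))
      = μ (TensorProduct.lid k C (TensorProduct.map ψ LinearMap.id t)) := by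
  induction t using TensorProduct.induction_on with
  | zero => simp
  | tmul a b => simp
  | add u v hu hv => simp only [map_add, hu, hv]

lemma convF (h : C →ₗ[k] R) (ψ : C →ₗ[k] k) (t : C ⊗[k] C) :
    LinearMap.mul' k R (TensorProduct.map h (Algebra.linearMap k R ∘ₗ ψ) t)
      = TensorProduct.rid k R (LinearMap.lTensor R ψ
          (TensorProduct.map h LinearMap.id t)) := by
  induction t using TensorProduct.induction_on with
  | zero => simp
  | tmul a b => simp [Algebra.smul_def, mul_comm]
  | add u v hu hv => simp only [map_add, hu, hv]

lemma convF2 (h : C →ₗ[k] R) (ψ : C →ₗ[k] k) (t : C ⊗[k] C) :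
    LinearMap.mul' k R (TensorProduct.map (Algebra.linearMap k R ∘ₗ ψ) h t)
      = TensorProduct.rid k R (LinearMap.lTensor R ψ
          (TensorProduct.map h LinearMap.id (TensorProduct.comm k C C t))) := by
  induction t using TensorProduct.induction_on with
  | zero => simp
  | tmul a b => simp [Algebra.smul_def]
  | add u v hu hv => simp only [map_add, hu, hv]

lemma conv_unit_right (f : C →ₗ[k] R) : conv k f (convUnit k C R) = f := by
  ext x
  have decomp : TensorProduct.map f (Algebra.linearMap k R ∘ₗ Coalgebra.counit)
      = TensorProduct.map f (Algebra.linearMap k R) ∘ₗ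
          LinearMap.lTensor C (Coalgebra.counit (R := k) (A := C)) := by
    apply TensorProduct.ext'; intro a b; simp
  simp only [conv, convUnit, LinearMap.comp_apply, decomp]
  rw [Coalgebra.lTensor_counit_comul]
  simp [Algebra.smul_def]

lemma conv_unit_left (f : C →ₗ[k] R) : conv k (convUnit k C R) f = f := by
  ext x
  have decomp : TensorProduct.map (Algebra.linearMap k R ∘ₗ Coalgebra.counit) f
      = TensorProduct.map (Algebra.linearMap k R) f ∘ₗ
          LinearMap.rTensor C (Coalgebra.counit (R := k) (A := C)) := by
    apply TensorProduct.ext'; intro a b; simp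
  simp only [conv, convUnit, LinearMap.comp_apply, decomp]
  rw [Coalgebra.rTensor_counit_comul]
  simp [Algebra.smul_def]

lemma conv_assoc (f g h : C →ₗ[k] R) :
    conv k (conv k f g) h = conv k f (conv k g h) := by
  have hm : LinearMap.mul' k R ∘ₗ
        TensorProduct.map (LinearMap.mul' k R) (LinearMap.id (R := k) (M := R))
      = (LinearMap.mul' k R ∘ₗ
          TensorProduct.map (LinearMap.id (R := k) (M := R)) (LinearMap.mul' k R)) ∘ₗ
          (TensorProduct.assoc k R R R).toLinearMap := by
    apply TensorProduct.ext_threefold; intro a b c; simp [mul_assoc]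
  have decompL : TensorProduct.map
        (LinearMap.mul' k R ∘ₗ TensorProduct.map f g ∘ₗ Coalgebra.comul) h
      = TensorProduct.map (LinearMap.mul' k R) LinearMap.id ∘ₗ
          TensorProduct.map (TensorProduct.map f g) h ∘ₗ
          TensorProduct.map (Coalgebra.comul (R := k)) LinearMap.id := by
    apply TensorProduct.ext'; intro a b; simp
  have decompR : TensorProduct.map f
        (LinearMap.mul' k R ∘ₗ TensorProduct.map g h ∘ₗ Coalgebra.comul)
      = TensorProduct.map LinearMap.id (LinearMap.mul' k R) ∘ₗ
          TensorProduct.map f (TensorProduct.map g h) ∘ₗ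
          TensorProduct.map LinearMap.id (Coalgebra.comul (R := k)) := by
    apply TensorProduct.ext'; intro a b; simp
  ext x
  simp only [conv, LinearMap.comp_apply, decompL, decompR]
  rw [show (LinearMap.mul' k R) ((TensorProduct.map (LinearMap.mul' k R) LinearMap.id)
        ((TensorProduct.map (TensorProduct.map f g) h)
          ((TensorProduct.map (Coalgebra.comul (R := k)) LinearMap.id) (Coalgebra.comul x))))
      = (LinearMap.mul' k R) ((TensorProduct.map LinearMap.id (LinearMap.mul' k R))
          ((TensorProduct.assoc k R R R)
            ((TensorProduct.map (TensorProduct.map f g) h)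
              ((TensorProduct.map (Coalgebra.comul (R := k)) LinearMap.id)
                (Coalgebra.comul x))))) from LinearMap.congr_fun hm _]
  rw [← TensorProduct.map_map_assoc]
  congr 3
  have := Coalgebra.coassoc_apply (R := k) (A := C) x
  simpa [LinearMap.rTensor, LinearMap.lTensor] using this

lemma conv_comm_of_lazy (μ : C →ₗ[k] R) (hμ : IsLazy k μ) (f : C →ₗ[k] R) :
    conv k μ f = conv k f μ := by
  ext x
  have h1 : ∀ t : C ⊗[k] C, LinearMap.mul' k R (TensorProduct.map f μ t)
      = LinearMap.mul' k R (TensorProduct.map LinearMap.id f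
          (TensorProduct.map μ LinearMap.id ((TensorProduct.comm k C C) t))) := by
    intro t
    induction t using TensorProduct.induction_on with
    | zero => simp
    | tmul a b => simp [mul_comm]
    | add u v hu hv => simp only [map_add, hu, hv]
  have h2 : ∀ t : C ⊗[k] C, TensorProduct.map μ f t
      = TensorProduct.map LinearMap.id f (TensorProduct.map μ LinearMap.id t) := by
    intro t
    induction t using TensorProduct.induction_on with
    | zero => simp
    | tmul a b => simp
    | add u v hu hv => simp only [map_add, hu, hv]
  simp only [conv, LinearMap.comp_apply]
  rw [h1, ← hμ x, h2]

end Helpers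

/-- a linear map `μ : C → R` is lazy iff it vanishes on `I₁(C)`;
composition with the quotient map `π : C → C/I₁(C)` is a bijection between
linear maps on the lazy quotient `C^[1] = C/I₁(C)` and lazy maps on `C`,
intertwines the convolution products, and restricts to a group isomorphism
`Reg(C/I₁(C), R) ≅ Reg_ℓ(C,R)` on convolution-invertible maps.
(The coalgebra structure on the quotient, with the projection a coalgebra
morphism, is given as a hypothesis.) -/


theorem lazy_iff_vanishes_on_lazySubspace_and_reg_iso
    (k : Type*) [Field k] (C : Type*)
    [AddCommGroup C] [Module k C] [Coalgebra k C]
    (R : Type*) [CommRing R] [Algebra k R]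
    [Coalgebra k (C ⧸ lazySubspace k C)]
    (hcomul : ∀ x : C,
      Coalgebra.comul (R := k) ((lazySubspace k C).mkQ x)
        = TensorProduct.map (lazySubspace k C).mkQ (lazySubspace k C).mkQ
            (Coalgebra.comul (R := k) x))
    (hcounit : ∀ x : C,
      Coalgebra.counit (R := k) ((lazySubspace k C).mkQ x)
        = Coalgebra.counit (R := k) x) :
    (∀ μ : C →ₗ[k] R, IsLazy k μ ↔ ∀ y ∈ lazySubspace k C, μ y = 0) ∧
    Function.Injective
      (fun ν : (C ⧸ lazySubspace k C) →ₗ[k] R => ν ∘ₗ (lazySubspace k C).mkQ) ∧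
    (∀ ν : (C ⧸ lazySubspace k C) →ₗ[k] R,
      IsLazy k (ν ∘ₗ (lazySubspace k C).mkQ)) ∧
    (∀ μ : C →ₗ[k] R, IsLazy k μ →
      ∃ ν : (C ⧸ lazySubspace k C) →ₗ[k] R, ν ∘ₗ (lazySubspace k C).mkQ = μ) ∧
    (∀ ν ν' : (C ⧸ lazySubspace k C) →ₗ[k] R,
      conv k ν ν' ∘ₗ (lazySubspace k C).mkQ
        = conv k (ν ∘ₗ (lazySubspace k C).mkQ) (ν' ∘ₗ (lazySubspace k C).mkQ)) ∧
    (∀ ν : (C ⧸ lazySubspace k C) →ₗ[k] R,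
      IsConvInvertible k ν ↔ IsConvInvertible k (ν ∘ₗ (lazySubspace k C).mkQ)) := by
  -- Part 1
  have part1 : ∀ μ : C →ₗ[k] R, IsLazy k μ ↔ ∀ y ∈ lazySubspace k C, μ y = 0 := by
    intro μ
    constructor
    · intro hlazy y hy
      induction hy using Submodule.span_induction with
      | mem y hy =>
          obtain ⟨x, φ, rfl⟩ := hy
          rw [map_sub, ← Frw2 μ φ (Coalgebra.comul x), ← Frw μ φ (Coalgebra.comul x),
            ← hlazy x, sub_self]
      | zero => simp
      | add u v hu hv hu' hv' => rw [map_add, hu', hv', add_zero]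
      | smul a u hu hu' => rw [map_smul, hu', smul_zero]
    · intro hvan x
      rw [← sub_eq_zero]
      apply sep_aux
      intro ψ
      rw [map_sub, map_sub, Frw μ ψ (Coalgebra.comul x), Frw2 μ ψ (Coalgebra.comul x),
        ← map_sub]
      have h0 := hvan _ (Submodule.subset_span ⟨x, ψ, rfl⟩)
      rw [show ((TensorProduct.rid k C)
              (TensorProduct.map LinearMap.id ψ (Coalgebra.comul x))
            - (TensorProduct.lid k C)
              (TensorProduct.map ψ LinearMap.id (Coalgebra.comul x)))
          = -((TensorProduct.lid k C)
              (TensorProduct.map ψ LinearMap.id (Coalgebra.comul x))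
            - (TensorProduct.rid k C)
              (TensorProduct.map LinearMap.id ψ (Coalgebra.comul x)))
          from (neg_sub _ _).symm,
        map_neg, h0, neg_zero]
  -- Part 2 : injectivity
  have part2 : Function.Injective
      (fun ν : (C ⧸ lazySubspace k C) →ₗ[k] R => ν ∘ₗ (lazySubspace k C).mkQ) := by
    intro ν ν' h
    ext q
    exact LinearMap.congr_fun h q
  -- Part 3
  have part3 : ∀ ν : (C ⧸ lazySubspace k C) →ₗ[k] R,
      IsLazy k (ν ∘ₗ (lazySubspace k C).mkQ) := by
    intro ν
    rw [part1]
    intro y hy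
    simp [(Submodule.Quotient.mk_eq_zero (lazySubspace k C)).2 hy]
  -- Part 4
  have part4 : ∀ μ : C →ₗ[k] R, IsLazy k μ →
      ∃ ν : (C ⧸ lazySubspace k C) →ₗ[k] R, ν ∘ₗ (lazySubspace k C).mkQ = μ := by
    intro μ hμ
    exact ⟨(lazySubspace k C).liftQ μ fun y hy => (part1 μ).1 hμ y hy,
      Submodule.liftQ_mkQ _ _ _⟩
  -- Part 5
  have part5 : ∀ ν ν' : (C ⧸ lazySubspace k C) →ₗ[k] R,
      conv k ν ν' ∘ₗ (lazySubspace k C).mkQ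
        = conv k (ν ∘ₗ (lazySubspace k C).mkQ) (ν' ∘ₗ (lazySubspace k C).mkQ) := by
    intro ν ν'
    ext x
    simp only [conv, LinearMap.comp_apply, hcomul x]
    rw [TensorProduct.map_comp]
    rfl
  -- unit compatibility
  have hunit : convUnit k (C ⧸ lazySubspace k C) R ∘ₗ (lazySubspace k C).mkQ
      = convUnit k C R := by
    ext x; simp only [convUnit, LinearMap.comp_apply, hcounit x]
  refine ⟨part1, part2, part3, part4, part5, ?_⟩
  intro ν
  constructor
  · rintro ⟨g, hg1, hg2⟩
    exact ⟨g ∘ₗ (lazySubspace k C).mkQ,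
      by rw [← part5, hg1, hunit], by rw [← part5, hg2, hunit]⟩
  · rintro ⟨h, h1, h2⟩
    have hμlazy : IsLazy k (ν ∘ₗ (lazySubspace k C).mkQ) := part3 ν
    have hcentral : ∀ f : C →ₗ[k] R,
        conv k (ν ∘ₗ (lazySubspace k C).mkQ) f
          = conv k f (ν ∘ₗ (lazySubspace k C).mkQ) :=
      conv_comm_of_lazy _ hμlazy
    have hlazy : IsLazy k h := by
      intro x
      rw [← sub_eq_zero]
      apply sep_aux
      intro ψ
      have hc : conv k h (Algebra.linearMap k R ∘ₗ ψ)
          = conv k (Algebra.linearMap k R ∘ₗ ψ) h := by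
        set fψ : C →ₗ[k] R := Algebra.linearMap k R ∘ₗ ψ with hfψ
        calc conv k h fψ
            = conv k h (conv k fψ (conv k (ν ∘ₗ (lazySubspace k C).mkQ) h)) := by
              rw [h1, conv_unit_right]
          _ = conv k h (conv k (conv k fψ (ν ∘ₗ (lazySubspace k C).mkQ)) h) := by
              rw [conv_assoc]
          _ = conv k h (conv k (conv k (ν ∘ₗ (lazySubspace k C).mkQ) fψ) h) := by
              rw [hcentral fψ]
          _ = conv k h (conv k (ν ∘ₗ (lazySubspace k C).mkQ) (conv k fψ h)) := by
              rw [conv_assoc]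
          _ = conv k (conv k h (ν ∘ₗ (lazySubspace k C).mkQ)) (conv k fψ h) := by
              rw [conv_assoc]
          _ = conv k fψ h := by rw [h2, conv_unit_left]
      have hcx := LinearMap.congr_fun hc x
      simp only [conv, LinearMap.comp_apply] at hcx
      rw [map_sub, map_sub, ← convF h ψ (Coalgebra.comul x),
        ← convF2 h ψ (Coalgebra.comul x), hcx, sub_self]
    obtain ⟨g, hg⟩ := part4 h hlazy
    refine ⟨g, part2 ?_, part2 ?_⟩
    · show conv k ν g ∘ₗ (lazySubspace k C).mkQ
        = convUnit k (C ⧸ lazySubspace k C) R ∘ₗ (lazySubspace k C).mkQ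
      rw [part5, hg, hunit]; exact h1
    · show conv k g ν ∘ₗ (lazySubspace k C).mkQ
        = convUnit k (C ⧸ lazySubspace k C) R ∘ₗ (lazySubspace k C).mkQ
      rw [part5, hg, hunit]; exact h2
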